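/- Let Γ be a compact topological group acting linearly and continuously on ℝ^m via ρ : Γ → GL(m,ℝ), let σ₁, σ₂ : Γ → {±1} be continuous group homomorphisms, and let L ∈ M_m(ℝ) satisfy L·ρ(γ) = σ₂(γ)·ρ(γ)·L for all γ. Let μ be the normalized Haar measure on Γ, and on the space P^k of homogeneous polynomial functions ℝ^m → ℝ of degree k define π(F)(x) = ∫_Γ σ₁(γ)σ₂(γ)·F(ρ(γ)x) dμ(γ), π̄(F)(x) = ∫_Γ σ₁(γ)·F(ρ(γ)x) dμ(γ), and ad_L(F)(x) = ⟨∇F(x), Lx⟩. Then π(ad_L(F)) = ad_L(π̄(F)) for all F ∈ P^k; consequently π(ad_L(P^k)) = ad_L(π̄(P^k)) = ad_L(P^k_{σ₁}(Γ)), where P^k_{σ₁}(Γ) = {F ∈ P^k : F(ρ(γ)x) = σ₁(γ)F(x) for all γ, x}. -/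

import Mathlib

open Matrix MeasureTheory MvPolynomial
open scoped ENNReal NNReal

/-- The gradient of `F` w.r.t. the canonical inner product on `ℝ^m`. -/
noncomputable def gradVec {m : ℕ} (F : (Fin m → ℝ) → ℝ) (x : Fin m → ℝ) : Fin m → ℝ :=
  fun i => fderiv ℝ F x (Pi.single i 1)

/-- `F : ℝ^m → ℝ` is a homogeneous polynomial function of degree `k`. -/
def IsHomogPolyFun (m k : ℕ) (F : (Fin m → ℝ) → ℝ) : Prop :=
  ∃ p : MvPolynomial (Fin m) ℝ, p.IsHomogeneous k ∧ ∀ x, F x = MvPolynomial.eval x p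

namespace HomologicalAux

lemma units_mul_self (u : ℤˣ) : ((u : ℤ) : ℝ) * ((u : ℤ) : ℝ) = 1 := by
  rcases Int.units_eq_one_or u with h | h <;> simp [h]

variable {m : ℕ}

lemma differentiable_eval (p : MvPolynomial (Fin m) ℝ) :
    Differentiable ℝ (fun x : Fin m → ℝ => eval x p) := by
  induction p using MvPolynomial.induction_on with
  | C a => simpa using differentiable_const (a : ℝ)
  | add p q hp hq => simpa using hp.fun_add hq
  | mul_X p i hp => simp only [_root_.map_mul, eval_X]; exact hp.mul (differentiable_apply i)

lemma gradVec_dot (F : (Fin m → ℝ) → ℝ) (x v : Fin m → ℝ) :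
    gradVec F x ⬝ᵥ v = fderiv ℝ F x v := by
  have hv : v = ∑ i, v i • (Pi.single i 1 : Fin m → ℝ) := by
    funext j
    simp [Pi.single_apply, Finset.sum_apply, eq_comm]
  conv_rhs => rw [hv]
  rw [_root_.map_sum]
  simp only [_root_.map_smul]
  simp [gradVec, dotProduct, mul_comm, smul_eq_mul]

/-- Substitution of a linear change of variables into a polynomial. -/
noncomputable def substM (A : Matrix (Fin m) (Fin m) ℝ) (p : MvPolynomial (Fin m) ℝ) :
    MvPolynomial (Fin m) ℝ :=
  aeval (fun i => ∑ j, C (A i j) * X j) p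

lemma eval_substM (A : Matrix (Fin m) (Fin m) ℝ) (p : MvPolynomial (Fin m) ℝ) (x : Fin m → ℝ) :
    eval x (substM A p) = eval (A *ᵥ x) p := by
  induction p using MvPolynomial.induction_on with
  | C a => simp [substM]
  | add p q hp hq => simp only [substM, _root_.map_add] at *; rw [hp, hq]
  | mul_X p i hp =>
      simp only [substM, _root_.map_mul, aeval_X, eval_X] at *
      rw [hp]
      congr 1
      simp [mulVec, dotProduct]

lemma substM_isHomogeneous {p : MvPolynomial (Fin m) ℝ} {k : ℕ}
    (hp : p.IsHomogeneous k) (A : Matrix (Fin m) (Fin m) ℝ) :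
    (substM A p).IsHomogeneous k := by
  have := hp.aeval (fun i => ∑ j, C (A i j) * X j) (n := 1) ?_
  · simpa [substM] using this
  · intro i
    apply MvPolynomial.IsHomogeneous.sum
    intro j _
    simpa using (isHomogeneous_X ℝ j).C_mul (A i j)

lemma continuous_coeff_substM (p : MvPolynomial (Fin m) ℝ) (d : Fin m →₀ ℕ) :
    Continuous fun A : Matrix (Fin m) (Fin m) ℝ => coeff d (substM A p) := by
  induction p using MvPolynomial.induction_on generalizing d with
  | C a => simpa [substM] using continuous_const
  | add p q hp hq =>
      simp only [substM, _root_.map_add, MvPolynomial.coeff_add]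
      exact (hp d).add (hq d)
  | mul_X p i hp =>
      have : ∀ A : Matrix (Fin m) (Fin m) ℝ,
          coeff d (substM A (p * X i)) =
            ∑ j, A i j * (if j ∈ d.support then
              coeff (d - Finsupp.single j 1) (substM A p) else 0) := by
        intro A
        rw [substM, _root_.map_mul, aeval_X, Finset.mul_sum]
        rw [MvPolynomial.coeff_sum]
        congr 1; funext j
        rw [mul_left_comm, MvPolynomial.coeff_C_mul, coeff_mul_X']
        rfl
      simp only [this]
      apply continuous_finset_sum
      intro j _
      refine Continuous.mul (continuous_apply_apply i j) ?_
      split_ifs with h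
      · exact hp _
      · exact continuous_const

lemma degree_eq_sum_univ (d : Fin m →₀ ℕ) : d.degree = ∑ i, d i :=
  Finset.sum_subset (Finset.subset_univ _)
    (fun i _ hi => Finsupp.notMem_support_iff.mp hi)

lemma support_subset_D {p : MvPolynomial (Fin m) ℝ} {k : ℕ} (hp : p.IsHomogeneous k) :
    p.support ⊆ Finset.univ.finsuppAntidiag k := by
  intro d hd
  rw [Finset.mem_finsuppAntidiag]
  refine ⟨?_, Finset.subset_univ _⟩
  have hdeg : d.degree = k := by
    by_contra h
    exact (MvPolynomial.mem_support_iff.mp hd) (hp.coeff_eq_zero h)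
  rw [← hdeg, degree_eq_sum_univ]

lemma eval_expand (D : Finset (Fin m →₀ ℕ)) (r : MvPolynomial (Fin m) ℝ)
    (hr : r.support ⊆ D) (x : Fin m → ℝ) :
    eval x r = ∑ d ∈ D, coeff d r * eval x (monomial d (1 : ℝ)) := by
  have hmono : ∀ d : Fin m →₀ ℕ, eval x (monomial d (1 : ℝ)) = ∏ i, x i ^ d i := by
    intro d
    rw [eval_monomial, one_mul, Finsupp.prod_pow]
  simp_rw [hmono]
  rw [eval_eq']
  exact Finset.sum_subset hr (fun d _ hd => by
    rw [MvPolynomial.notMem_support_iff.mp hd, zero_mul])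

lemma fderiv_eval_expand (D : Finset (Fin m →₀ ℕ)) (r : MvPolynomial (Fin m) ℝ)
    (hr : r.support ⊆ D) (x v : Fin m → ℝ) :
    fderiv ℝ (fun y => eval y r) x v
      = ∑ d ∈ D, coeff d r * fderiv ℝ (fun y => eval y (monomial d (1 : ℝ))) x v := by
  have hfun : (fun y : Fin m → ℝ => eval y r)
      = fun y => ∑ d ∈ D, coeff d r * eval y (monomial d (1 : ℝ)) :=
    funext fun y => eval_expand D r hr y
  have h : HasFDerivAt (fun y : Fin m → ℝ => eval y r)
      (∑ d ∈ D, coeff d r • fderiv ℝ (fun y => eval y (monomial d (1 : ℝ))) x) x := by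
    rw [hfun]
    exact HasFDerivAt.fun_sum fun d _ => ((differentiable_eval _ x).hasFDerivAt).const_mul _
  rw [h.fderiv, ContinuousLinearMap.sum_apply]
  simp only [ContinuousLinearMap.smul_apply, smul_eq_mul]

lemma fderiv_comp_mulVec (F : (Fin m → ℝ) → ℝ) (hF : Differentiable ℝ F)
    (A : Matrix (Fin m) (Fin m) ℝ) (x v : Fin m → ℝ) :
    fderiv ℝ (fun y => F (A *ᵥ y)) x v = fderiv ℝ F (A *ᵥ x) (A *ᵥ v) := by
  set M : (Fin m → ℝ) →L[ℝ] (Fin m → ℝ) := LinearMap.toContinuousLinearMap A.mulVecLin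
  have hM : ∀ y, M y = A *ᵥ y := fun y => rfl
  have hcomp : HasFDerivAt (fun y => F (A *ᵥ y)) ((fderiv ℝ F (A *ᵥ x)).comp M) x := by
    have h1 : HasFDerivAt F (fderiv ℝ F (A *ᵥ x)) (M x) := (hF (A *ᵥ x)).hasFDerivAt
    exact h1.comp x M.hasFDerivAt
  rw [hcomp.fderiv]
  rfl

lemma integrable_of_continuous {Γ : Type*} [TopologicalSpace Γ] [CompactSpace Γ]
    [MeasurableSpace Γ] [OpensMeasurableSpace Γ] (μ : Measure Γ) [IsFiniteMeasure μ]
    (f : Γ → ℝ) (hf : Continuous f) : Integrable f μ := by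
  obtain ⟨C, hC⟩ := (isCompact_range hf).isBounded.exists_norm_le
  exact ⟨hf.aestronglyMeasurable,
    HasFiniteIntegral.of_bounded (C := C)
      (Filter.Eventually.of_forall fun γ => hC _ (Set.mem_range_self γ))⟩

lemma haar_right_invariant {Γ : Type*} [Group Γ] [TopologicalSpace Γ] [IsTopologicalGroup Γ]
    [CompactSpace Γ] [MeasurableSpace Γ] [BorelSpace Γ]
    (μ : Measure Γ) [μ.IsHaarMeasure] [IsProbabilityMeasure μ] :
    μ.IsMulRightInvariant := by
  constructor
  intro g
  have h1 : Measure.map (· * g) μ = Measure.haarScalarFactor (Measure.map (· * g) μ) μ • μ :=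
    Measure.isMulInvariant_eq_smul_of_compactSpace _ μ
  have h2 : IsProbabilityMeasure (Measure.map (· * g) μ) :=
    Measure.isProbabilityMeasure_map (measurable_mul_const g).aemeasurable
  have h3 : (Measure.map (· * g) μ) Set.univ = 1 := h2.measure_univ
  rw [h1] at h3
  simp only [Measure.smul_apply, measure_univ, smul_eq_mul, mul_one] at h3
  have h4 : (((Measure.map (· * g) μ).haarScalarFactor μ : ℝ≥0) : ℝ≥0∞) = 1 := by
    rw [ENNReal.smul_def, smul_eq_mul, mul_one] at h3; exact_mod_cast h3
  rw [h1, ENNReal.smul_def, h4, one_smul]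

end HomologicalAux

open HomologicalAux

/-- π ∘ ad_L = ad_L ∘ π̄ on P^k, where π and π̄ are the Haar averaging
projections with characters σ₁σ₂ and σ₁; consequently π(ad_L(P^k)) = ad_L(P^k_{σ₁}(Γ)). -/
theorem projection_commutes_with_homological_operator
    {Γ : Type*} [Group Γ] [TopologicalSpace Γ] [IsTopologicalGroup Γ] [CompactSpace Γ]
    [MeasurableSpace Γ] [BorelSpace Γ]
    (m : ℕ)
    (ρ : Γ →* Matrix.GeneralLinearGroup (Fin m) ℝ)
    (hρ : Continuous fun γ => (ρ γ : Matrix (Fin m) (Fin m) ℝ))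
    (σ₁ σ₂ : Γ →* ℤˣ)
    (hσ₁ : Continuous fun γ => ((σ₁ γ : ℤ) : ℝ))
    (hσ₂ : Continuous fun γ => ((σ₂ γ : ℤ) : ℝ))
    (L : Matrix (Fin m) (Fin m) ℝ)
    (hL : ∀ γ : Γ, L * (ρ γ : Matrix (Fin m) (Fin m) ℝ)
      = ((σ₂ γ : ℤ) : ℝ) • ((ρ γ : Matrix (Fin m) (Fin m) ℝ) * L))
    (μ : Measure Γ) [μ.IsHaarMeasure] [IsProbabilityMeasure μ]
    (k : ℕ) (hk : 1 ≤ k)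
    (Pj PjBar : ((Fin m → ℝ) → ℝ) → ((Fin m → ℝ) → ℝ))
    (hPj : ∀ (F : (Fin m → ℝ) → ℝ) (x : Fin m → ℝ),
      Pj F x = ∫ γ, ((σ₁ γ : ℤ) : ℝ) * ((σ₂ γ : ℤ) : ℝ) *
        F ((ρ γ : Matrix (Fin m) (Fin m) ℝ) *ᵥ x) ∂μ)
    (hPjBar : ∀ (F : (Fin m → ℝ) → ℝ) (x : Fin m → ℝ),
      PjBar F x = ∫ γ, ((σ₁ γ : ℤ) : ℝ) *
        F ((ρ γ : Matrix (Fin m) (Fin m) ℝ) *ᵥ x) ∂μ)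
    (adL : ((Fin m → ℝ) → ℝ) → ((Fin m → ℝ) → ℝ))
    (hadL : ∀ (F : (Fin m → ℝ) → ℝ) (x : Fin m → ℝ), adL F x = gradVec F x ⬝ᵥ (L *ᵥ x)) :
    -- π(ad_L F) = ad_L(π̄ F) on P^k
    (∀ F, IsHomogPolyFun m k F → Pj (adL F) = adL (PjBar F)) ∧
    -- consequently π(ad_L(P^k)) = ad_L(P^k_{σ₁}(Γ))
    (∀ G : (Fin m → ℝ) → ℝ,
      (∃ F, IsHomogPolyFun m k F ∧ G = Pj (adL F)) ↔
      (∃ F, IsHomogPolyFun m k F ∧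
        (∀ (γ : Γ) (x : Fin m → ℝ),
          F ((ρ γ : Matrix (Fin m) (Fin m) ℝ) *ᵥ x) = ((σ₁ γ : ℤ) : ℝ) * F x) ∧
        G = adL F)) := by
  haveI := haar_right_invariant μ
  set D : Finset (Fin m →₀ ℕ) := Finset.univ.finsuppAntidiag k with hD
  -- integrability of the coefficient functions
  have hint : ∀ (p : MvPolynomial (Fin m) ℝ) (d : Fin m →₀ ℕ) (r : ℝ),
      Integrable (fun γ => ((σ₁ γ : ℤ) : ℝ) *
        coeff d (substM ((ρ γ : Matrix (Fin m) (Fin m) ℝ)) p) * r) μ := by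
    intro p d r
    exact integrable_of_continuous μ _
      ((hσ₁.mul ((continuous_coeff_substM p d).comp hρ)).mul continuous_const)
  -- the averaged function is a polynomial with integrated coefficients
  have key : ∀ (p : MvPolynomial (Fin m) ℝ), p.IsHomogeneous k →
      ∀ F : (Fin m → ℝ) → ℝ, (∀ x, F x = eval x p) →
      PjBar F = fun y => ∑ d ∈ D,
        (∫ γ, ((σ₁ γ : ℤ) : ℝ) *
          coeff d (substM ((ρ γ : Matrix (Fin m) (Fin m) ℝ)) p) ∂μ)
        * eval y (monomial d (1 : ℝ)) := by
    intro p hp F hFp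
    funext y
    rw [hPjBar]
    have hstep : ∀ γ : Γ, ((σ₁ γ : ℤ) : ℝ) * F ((ρ γ : Matrix (Fin m) (Fin m) ℝ) *ᵥ y)
        = ∑ d ∈ D, ((σ₁ γ : ℤ) : ℝ) *
            coeff d (substM ((ρ γ : Matrix (Fin m) (Fin m) ℝ)) p)
            * eval y (monomial d (1 : ℝ)) := by
      intro γ
      rw [hFp, ← eval_substM, eval_expand D _ (support_subset_D (substM_isHomogeneous hp _)) y,
        Finset.mul_sum]
      simp [mul_assoc]
    simp_rw [hstep]
    rw [integral_finset_sum _ (fun d _ => hint p d _)]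
    exact Finset.sum_congr rfl fun d _ => integral_mul_const _ _
  -- Part 1
  have part1 : ∀ F, IsHomogPolyFun m k F → Pj (adL F) = adL (PjBar F) := by
    rintro F ⟨p, hp, hFp⟩
    have hFdiff : Differentiable ℝ F := by
      have : F = fun x => eval x p := funext hFp
      rw [this]; exact differentiable_eval p
    have hqsupp : ∀ γ : Γ,
        (substM ((ρ γ : Matrix (Fin m) (Fin m) ℝ)) p).support ⊆ D :=
      fun γ => support_subset_D (substM_isHomogeneous hp _)
    funext x
    -- compute the derivative of the averaged function
    have hPB : ∀ v : Fin m → ℝ, fderiv ℝ (PjBar F) x v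
        = ∫ γ, ((σ₁ γ : ℤ) : ℝ) *
            fderiv ℝ F ((ρ γ : Matrix (Fin m) (Fin m) ℝ) *ᵥ x)
              ((ρ γ : Matrix (Fin m) (Fin m) ℝ) *ᵥ v) ∂μ := by
      intro v
      have hD2 : HasFDerivAt (PjBar F)
          (∑ d ∈ D, (∫ γ, ((σ₁ γ : ℤ) : ℝ) *
              coeff d (substM ((ρ γ : Matrix (Fin m) (Fin m) ℝ)) p) ∂μ)
            • fderiv ℝ (fun y => eval y (monomial d (1 : ℝ))) x) x := by
        rw [key p hp F hFp]
        exact HasFDerivAt.fun_sum fun d _ =>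
          ((differentiable_eval _ x).hasFDerivAt).const_mul _
      rw [hD2.fderiv, ContinuousLinearMap.sum_apply]
      simp only [ContinuousLinearMap.smul_apply, smul_eq_mul]
      have hswap : ∀ d ∈ D,
          (∫ γ, ((σ₁ γ : ℤ) : ℝ) *
              coeff d (substM ((ρ γ : Matrix (Fin m) (Fin m) ℝ)) p) ∂μ)
            * (fderiv ℝ (fun y => eval y (monomial d (1 : ℝ))) x v)
          = ∫ γ, ((σ₁ γ : ℤ) : ℝ) *
              coeff d (substM ((ρ γ : Matrix (Fin m) (Fin m) ℝ)) p)
              * (fderiv ℝ (fun y => eval y (monomial d (1 : ℝ))) x v) ∂μ :=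
        fun d _ => (integral_mul_const _ _).symm
      rw [Finset.sum_congr rfl hswap, ← integral_finset_sum _ (fun d _ => hint p d _)]
      congr 1
      funext γ
      have hfeq : (fun y : Fin m → ℝ =>
            eval y (substM ((ρ γ : Matrix (Fin m) (Fin m) ℝ)) p))
          = fun y => F ((ρ γ : Matrix (Fin m) (Fin m) ℝ) *ᵥ y) :=
        funext fun y => by rw [eval_substM, ← hFp]
      calc ∑ d ∈ D, ((σ₁ γ : ℤ) : ℝ) *
              coeff d (substM ((ρ γ : Matrix (Fin m) (Fin m) ℝ)) p)
              * (fderiv ℝ (fun y => eval y (monomial d (1 : ℝ))) x v)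
          = ((σ₁ γ : ℤ) : ℝ) * ∑ d ∈ D,
              coeff d (substM ((ρ γ : Matrix (Fin m) (Fin m) ℝ)) p)
              * (fderiv ℝ (fun y => eval y (monomial d (1 : ℝ))) x v) := by
            rw [Finset.mul_sum]; exact Finset.sum_congr rfl fun d _ => by ring
        _ = ((σ₁ γ : ℤ) : ℝ) * fderiv ℝ
              (fun y => eval y (substM ((ρ γ : Matrix (Fin m) (Fin m) ℝ)) p)) x v := by
            rw [fderiv_eval_expand D _ (hqsupp γ) x v]
        _ = ((σ₁ γ : ℤ) : ℝ) * fderiv ℝ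
              (fun y => F ((ρ γ : Matrix (Fin m) (Fin m) ℝ) *ᵥ y)) x v := by rw [hfeq]
        _ = ((σ₁ γ : ℤ) : ℝ) *
              fderiv ℝ F ((ρ γ : Matrix (Fin m) (Fin m) ℝ) *ᵥ x)
                ((ρ γ : Matrix (Fin m) (Fin m) ℝ) *ᵥ v) := by
            rw [fderiv_comp_mulVec F hFdiff]
    rw [hPj, hadL, gradVec_dot, hPB (L *ᵥ x)]
    congr 1
    funext γ
    rw [hadL, gradVec_dot]
    have hv : L *ᵥ ((ρ γ : Matrix (Fin m) (Fin m) ℝ) *ᵥ x)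
        = ((σ₂ γ : ℤ) : ℝ) • ((ρ γ : Matrix (Fin m) (Fin m) ℝ) *ᵥ (L *ᵥ x)) := by
      rw [mulVec_mulVec, hL γ, smul_mulVec, ← mulVec_mulVec]
    rw [hv, ContinuousLinearMap.map_smul, smul_eq_mul]
    have h2 : ((σ₁ γ : ℤ) : ℝ) * ((σ₂ γ : ℤ) : ℝ) *
          (((σ₂ γ : ℤ) : ℝ) *
            fderiv ℝ F ((ρ γ : Matrix (Fin m) (Fin m) ℝ) *ᵥ x)
              ((ρ γ : Matrix (Fin m) (Fin m) ℝ) *ᵥ (L *ᵥ x)))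
        = (((σ₂ γ : ℤ) : ℝ) * ((σ₂ γ : ℤ) : ℝ)) *
          (((σ₁ γ : ℤ) : ℝ) *
            fderiv ℝ F ((ρ γ : Matrix (Fin m) (Fin m) ℝ) *ᵥ x)
              ((ρ γ : Matrix (Fin m) (Fin m) ℝ) *ᵥ (L *ᵥ x))) := by ring
    rw [h2, units_mul_self, one_mul]
  -- the averaged function is again a homogeneous polynomial function
  have polyPjBar : ∀ F, IsHomogPolyFun m k F → IsHomogPolyFun m k (PjBar F) := by
    rintro F ⟨p, hp, hFp⟩
    refine ⟨∑ d ∈ D, monomial d (∫ γ, ((σ₁ γ : ℤ) : ℝ) *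
        coeff d (substM ((ρ γ : Matrix (Fin m) (Fin m) ℝ)) p) ∂μ), ?_, ?_⟩
    · apply MvPolynomial.IsHomogeneous.sum
      intro d hd
      apply isHomogeneous_monomial
      rw [hD, Finset.mem_finsuppAntidiag] at hd
      rw [degree_eq_sum_univ]
      exact hd.1
    · intro x
      simp only [key p hp F hFp, _root_.map_sum]
      exact Finset.sum_congr rfl fun d _ => by rw [eval_monomial, eval_monomial, one_mul]
  -- equivariance of the averaged function
  have equiv : ∀ (F : (Fin m → ℝ) → ℝ) (g : Γ) (x : Fin m → ℝ),
      PjBar F ((ρ g : Matrix (Fin m) (Fin m) ℝ) *ᵥ x)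
        = ((σ₁ g : ℤ) : ℝ) * PjBar F x := by
    intro F g x
    rw [hPjBar, hPjBar]
    have hfun : (fun γ : Γ => ((σ₁ γ : ℤ) : ℝ) *
          F ((ρ γ : Matrix (Fin m) (Fin m) ℝ) *ᵥ
            ((ρ g : Matrix (Fin m) (Fin m) ℝ) *ᵥ x)))
        = fun γ : Γ => (fun δ : Γ => ((σ₁ g : ℤ) : ℝ) * (((σ₁ δ : ℤ) : ℝ) *
            F ((ρ δ : Matrix (Fin m) (Fin m) ℝ) *ᵥ x))) (γ * g) := by
      funext γ
      simp only
      rw [mulVec_mulVec]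
      have hm : (ρ γ : Matrix (Fin m) (Fin m) ℝ) * (ρ g : Matrix (Fin m) (Fin m) ℝ)
          = (ρ (γ * g) : Matrix (Fin m) (Fin m) ℝ) := by
        rw [_root_.map_mul]; rfl
      rw [hm]
      have hs : ((σ₁ (γ * g) : ℤ) : ℝ) = ((σ₁ γ : ℤ) : ℝ) * ((σ₁ g : ℤ) : ℝ) := by
        rw [_root_.map_mul]; push_cast [Units.val_mul]; ring
      rw [hs]
      have h2 : ((σ₁ g : ℤ) : ℝ) * (((σ₁ γ : ℤ) : ℝ) * ((σ₁ g : ℤ) : ℝ) *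
            F ((ρ (γ * g) : Matrix (Fin m) (Fin m) ℝ) *ᵥ x))
          = (((σ₁ g : ℤ) : ℝ) * ((σ₁ g : ℤ) : ℝ)) * (((σ₁ γ : ℤ) : ℝ) *
            F ((ρ (γ * g) : Matrix (Fin m) (Fin m) ℝ) *ᵥ x)) := by ring
      rw [h2, units_mul_self, one_mul]
    rw [hfun, integral_mul_right_eq_self
      (fun δ : Γ => ((σ₁ g : ℤ) : ℝ) * (((σ₁ δ : ℤ) : ℝ) *
        F ((ρ δ : Matrix (Fin m) (Fin m) ℝ) *ᵥ x))) g]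
    rw [integral_const_mul]
  -- equivariant functions are fixed by the averaging
  have fixed : ∀ F : (Fin m → ℝ) → ℝ,
      (∀ (γ : Γ) (x : Fin m → ℝ),
        F ((ρ γ : Matrix (Fin m) (Fin m) ℝ) *ᵥ x) = ((σ₁ γ : ℤ) : ℝ) * F x) →
      PjBar F = F := by
    intro F hFe
    funext x
    rw [hPjBar]
    have hfun : (fun γ : Γ => ((σ₁ γ : ℤ) : ℝ) *
          F ((ρ γ : Matrix (Fin m) (Fin m) ℝ) *ᵥ x)) = fun _ : Γ => F x := by
      funext γ
      rw [hFe, ← mul_assoc, units_mul_self, one_mul]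
    rw [hfun]
    simp
  refine ⟨part1, fun G => ⟨?_, ?_⟩⟩
  · rintro ⟨F, hF, rfl⟩
    exact ⟨PjBar F, polyPjBar F hF, fun γ x => equiv F γ x, part1 F hF⟩
  · rintro ⟨F, hF, hFe, rfl⟩
    exact ⟨F, hF, by rw [part1 F hF, fixed F hFe]⟩
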